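/- For a positive even integer n and a positive even integer m ≤ n, the number of strings x of length n over {A,C,G,T} with GC-content m and satisfying x = x^{rc} is exactly C(n/2, m/2)·2^{n/2}. -/

import Mathlib

/-- Watson–Crick complement on `{A,C,G,T} = {0,1,2,3}`: swaps `0↔3`, `1↔2`. -/
def dnaCompl (x : Fin 4) : Fin 4 := 3 - x

/-- Reverse-complement of a DNA string. -/
def dnaRC {n : ℕ} (x : Fin n → Fin 4) : Fin n → Fin 4 := fun i => dnaCompl (x i.rev)

/-- GC-content: the number of coordinates equal to `G` or `C` (here `1` or `2`). -/
def gcContent {n : ℕ} (x : Fin n → Fin 4) : ℕ :=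
  (Finset.univ.filter (fun i => x i = 1 ∨ x i = 2)).card

/- auxiliary encoding of `Fin 4` as two bits -/
def dnaEnc (v : Fin 4) : Bool × Bool := (decide (v = 1 ∨ v = 2), decide (v = 2 ∨ v = 3))

def dnaDec : Bool × Bool → Fin 4
  | (false, false) => 0
  | (true, false) => 1
  | (true, true) => 2
  | (false, true) => 3

lemma dnaDec_enc (v : Fin 4) : dnaDec (dnaEnc v) = v := by revert v; decide

lemma dnaEnc_dec (p : Bool × Bool) : dnaEnc (dnaDec p) = p := by revert p; decide

lemma dnaEnc_fst (v : Fin 4) : (dnaEnc v).1 = true ↔ (v = 1 ∨ v = 2) := by revert v; decide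

lemma dnaCompl_compl (v : Fin 4) : dnaCompl (dnaCompl v) = v := by revert v; decide

lemma dnaCompl_gc (v : Fin 4) : (dnaCompl v = 1 ∨ dnaCompl v = 2) ↔ (v = 1 ∨ v = 2) := by
  revert v; decide

/-- Counting strings over `Fin 4` of length `k` with GC-content `j`. -/
lemma count_gc (k j : ℕ) :
    (Finset.univ.filter (fun y : Fin k → Fin 4 => gcContent y = j)).card =
      Nat.choose k j * 2 ^ k := by
  have hcard : ((Finset.univ : Finset (Fin k)).powersetCard j ×ˢ
      (Finset.univ : Finset (Fin k → Bool))).card = Nat.choose k j * 2 ^ k := by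
    rw [Finset.card_product, Finset.card_powersetCard]
    simp [Finset.card_univ]
  rw [← hcard]
  apply Finset.card_nbij'
    (i := fun y => (Finset.univ.filter (fun i => (dnaEnc (y i)).1 = true),
      fun i => (dnaEnc (y i)).2))
    (j := fun p => fun i => dnaDec (decide (i ∈ p.1), p.2 i))
  · intro y hy
    simp only [Finset.mem_coe, Finset.mem_filter, Finset.mem_univ, true_and] at hy
    simp only [Finset.mem_coe, Finset.mem_product, Finset.mem_powersetCard, Finset.mem_univ, and_true]
    refine ⟨fun i _ => Finset.mem_univ i, ?_⟩
    rw [← hy]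
    unfold gcContent
    congr 1
    apply Finset.filter_congr
    intro i _
    simp [dnaEnc_fst]
  · intro p hp
    simp only [Finset.mem_coe, Finset.mem_product, Finset.mem_powersetCard, Finset.mem_univ, and_true] at hp
    simp only [Finset.mem_coe, Finset.mem_filter, Finset.mem_univ, true_and]
    show (Finset.univ.filter (fun i => dnaDec (decide (i ∈ p.1), p.2 i) = 1 ∨
        dnaDec (decide (i ∈ p.1), p.2 i) = 2)).card = j
    have hfe : Finset.univ.filter (fun i => dnaDec (decide (i ∈ p.1), p.2 i) = 1 ∨
        dnaDec (decide (i ∈ p.1), p.2 i) = 2) = p.1 := by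
      ext i
      simp only [Finset.mem_filter, Finset.mem_univ, true_and]
      rw [← dnaEnc_fst, dnaEnc_dec]
      by_cases h : i ∈ p.1 <;> simp [h]
    rw [hfe, hp.2]
  · intro y _
    funext i
    have : decide (i ∈ Finset.univ.filter (fun i => (dnaEnc (y i)).1 = true)) = (dnaEnc (y i)).1 := by
      by_cases h : (dnaEnc (y i)).1 = true
      · simp [Finset.mem_filter, h]
      · simp only [Bool.not_eq_true] at h
        simp [Finset.mem_filter, h]
    beta_reduce
    rw [this]
    exact dnaDec_enc (y i)
  · intro p _
    ext i
    · simp [dnaEnc_dec, Finset.mem_filter]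
    · simp [dnaEnc_dec]

/-- extension of a half-string to a full self-reverse-complementary string -/
def dnaExt {k : ℕ} (y : Fin k → Fin 4) : Fin (k + k) → Fin 4 :=
  fun i => if h : (i : ℕ) < k then y ⟨i, h⟩
    else dnaCompl (y ⟨(i.rev : ℕ), by
      have := i.isLt; rw [Fin.val_rev]; omega⟩)

lemma key_count (k j : ℕ) :
    (Finset.univ.filter
        (fun x : Fin (k + k) → Fin 4 => gcContent x = j + j ∧ x = dnaRC x)).card =
      Nat.choose k j * 2 ^ k := by
  rw [← count_gc k j]
  apply Finset.card_nbij'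
    (i := fun x => fun i : Fin k => x ⟨(i : ℕ), by omega⟩)
    (j := fun y => dnaExt y)
  · -- restriction lands in the target set
    intro x hx
    simp only [Finset.mem_coe, Finset.mem_filter, Finset.mem_univ, true_and] at hx ⊢
    obtain ⟨hgc, hrc⟩ := hx
    -- gcContent of x equals twice that of the restriction
    have hsplit : gcContent x = gcContent (fun i : Fin k => x ⟨(i : ℕ), by omega⟩)
        + gcContent (fun i : Fin k => x ⟨(i : ℕ), by omega⟩) := by
      unfold gcContent
      rw [Finset.card_filter, Finset.card_filter]
      rw [Fin.sum_univ_add (f := fun i : Fin (k + k) => if x i = 1 ∨ x i = 2 then 1 else 0)]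
      have hBA : (∑ i : Fin k,
            if x (Fin.natAdd k i) = 1 ∨ x (Fin.natAdd k i) = 2 then (1:ℕ) else 0) =
          ∑ i : Fin k,
            if x (Fin.castAdd k i) = 1 ∨ x (Fin.castAdd k i) = 2 then (1:ℕ) else 0 := by
        have step : ∀ i : Fin k,
            (if x (Fin.natAdd k i) = 1 ∨ x (Fin.natAdd k i) = 2 then (1:ℕ) else 0) =
            (if x (Fin.castAdd k i.rev) = 1 ∨ x (Fin.castAdd k i.rev) = 2 then (1:ℕ) else 0) := by
          intro i
          have hrev : (Fin.natAdd k i).rev = Fin.castAdd k i.rev := by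
            apply Fin.ext
            rw [Fin.val_rev]
            show k + k - ((Fin.natAdd k i : Fin (k+k)) : ℕ) - 1 = ((i.rev : Fin k) : ℕ)
            rw [Fin.val_rev]
            have := i.isLt
            simp [Fin.natAdd]
            omega
          have hx' : x (Fin.natAdd k i) = dnaCompl (x (Fin.castAdd k i.rev)) := by
            conv_lhs => rw [hrc]
            rw [dnaRC, hrev]
          rw [hx']
          by_cases h : x (Fin.castAdd k i.rev) = 1 ∨ x (Fin.castAdd k i.rev) = 2
          · rw [if_pos ((dnaCompl_gc _).mpr h), if_pos h]
          · rw [if_neg (fun hc => h ((dnaCompl_gc _).mp hc)), if_neg h]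
        rw [Finset.sum_congr rfl (fun i _ => step i)]
        exact Fintype.sum_bijective Fin.rev Fin.rev_bijective _ _ (fun i => rfl)
      rw [hBA]
      exact congrArg₂ (· + ·) (Finset.sum_congr rfl fun i _ => rfl)
        (Finset.sum_congr rfl fun i _ => rfl)
    omega
  · -- extension lands in the source set
    intro y hy
    simp only [Finset.mem_coe, Finset.mem_filter, Finset.mem_univ, true_and] at hy ⊢
    constructor
    · -- gcContent (dnaExt y) = j + j
      unfold gcContent
      rw [Finset.card_filter,
        Fin.sum_univ_add (f := fun i : Fin (k + k) => if dnaExt y i = 1 ∨ dnaExt y i = 2 then 1 else 0)]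
      have h1 : ∀ i : Fin k, dnaExt y (Fin.castAdd k i) = y i := by
        intro i
        rw [dnaExt, dif_pos (show ((Fin.castAdd k i : Fin (k+k)) : ℕ) < k from i.isLt)]
        exact congrArg y (Fin.ext rfl)
      have h2 : ∀ i : Fin k,
          (if dnaExt y (Fin.natAdd k i) = 1 ∨ dnaExt y (Fin.natAdd k i) = 2 then (1:ℕ) else 0)
          = if y i.rev = 1 ∨ y i.rev = 2 then 1 else 0 := by
        intro i
        have hv : dnaExt y (Fin.natAdd k i) = dnaCompl (y i.rev) := by
          rw [dnaExt, dif_neg (show ¬ ((Fin.natAdd k i : Fin (k+k)) : ℕ) < k by simp [Fin.natAdd])]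
          apply congrArg
          apply congrArg
          apply Fin.ext
          show ((Fin.natAdd k i).rev : ℕ) = ((i.rev : Fin k) : ℕ)
          rw [Fin.val_rev, Fin.val_rev]
          simp [Fin.natAdd]
          omega
        rw [hv]
        by_cases h : y i.rev = 1 ∨ y i.rev = 2
        · rw [if_pos ((dnaCompl_gc _).mpr h), if_pos h]
        · rw [if_neg (fun hc => h ((dnaCompl_gc _).mp hc)), if_neg h]
      have hsum2 : ∑ i : Fin k,
          (if dnaExt y (Fin.natAdd k i) = 1 ∨ dnaExt y (Fin.natAdd k i) = 2 then (1:ℕ) else 0) =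
          ∑ i : Fin k, (if y i = 1 ∨ y i = 2 then (1:ℕ) else 0) := by
        rw [Finset.sum_congr rfl (fun i _ => h2 i)]
        exact Fintype.sum_bijective Fin.rev Fin.rev_bijective _ _ (fun i => rfl)
      rw [hsum2]
      have hsum1 : ∑ i : Fin k, (if dnaExt y (Fin.castAdd k i) = 1 ∨ dnaExt y (Fin.castAdd k i) = 2
          then (1:ℕ) else 0) = ∑ i : Fin k, (if y i = 1 ∨ y i = 2 then (1:ℕ) else 0) := by
        apply Finset.sum_congr rfl
        intro i _
        rw [h1 i]
      rw [hsum1]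
      rw [← Finset.card_filter]
      unfold gcContent at hy
      omega
    · -- dnaExt y is its own reverse complement
      funext i
      rw [dnaRC]
      by_cases h : (i : ℕ) < k
      · have hrevge : ¬ ((i.rev : Fin (k+k)) : ℕ) < k := by
          rw [Fin.val_rev]; omega
        rw [show dnaExt y i = y ⟨(i:ℕ), h⟩ from dif_pos h]
        rw [show dnaExt y i.rev = dnaCompl (y ⟨((i.rev).rev : ℕ), _⟩) from dif_neg hrevge]
        rw [dnaCompl_compl]
        apply congrArg
        apply Fin.ext
        show (i : ℕ) = ((i.rev.rev : Fin (k+k)) : ℕ)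
        rw [Fin.rev_rev]
      · have hrevlt : ((i.rev : Fin (k+k)) : ℕ) < k := by
          have := i.isLt; rw [Fin.val_rev]; omega
        rw [show dnaExt y i = dnaCompl (y ⟨(i.rev : ℕ), _⟩) from dif_neg h]
        rw [show dnaExt y i.rev = y ⟨(i.rev : ℕ), hrevlt⟩ from dif_pos hrevlt]
  · -- left inverse: dnaExt of restriction recovers x (uses self-RC)
    intro x hx
    simp only [Finset.mem_coe, Finset.mem_filter, Finset.mem_univ, true_and] at hx
    obtain ⟨_, hrc⟩ := hx
    funext i
    beta_reduce
    by_cases h : (i : ℕ) < k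
    · rw [show dnaExt _ i = _ from dif_pos h]
    · rw [show dnaExt (fun i : Fin k => x ⟨(i : ℕ), by omega⟩) i = _ from dif_neg h]
      conv_rhs => rw [hrc]
      rfl
  · -- right inverse: restriction of dnaExt recovers y
    intro y _
    funext i
    beta_reduce
    rw [show dnaExt y ⟨(i : ℕ), by omega⟩ = _ from dif_pos (show ((i:ℕ)) < k from i.isLt)]

/-- For even `n` and even `m ≤ n`, the number of DNA strings of length `n` with
GC-content `m` equal to their own reverse-complement is `C(n/2, m/2) · 2^(n/2)`. -/
theorem count_gc_self_rc (n m : ℕ) (hn : 0 < n) (hm : 0 < m) (hmn : m ≤ n)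
    (hne : Even n) (hme : Even m) :
    (Finset.univ.filter
        (fun x : Fin n → Fin 4 => gcContent x = m ∧ x = dnaRC x)).card =
      Nat.choose (n / 2) (m / 2) * 2 ^ (n / 2) := by
  obtain ⟨k, hk⟩ := hne
  obtain ⟨j, hj⟩ := hme
  subst hk
  subst hj
  rw [show (k + k) / 2 = k by omega, show (j + j) / 2 = j by omega]
  exact key_count k j
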